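/- arXiv:1810.11698 — 3 statements merged into one kernel-verified Lean document; each statement's English description precedes it below -/
import Mathlib

section
/- Let p ≥ 1, let σ : Fin p → ℝ with σ j > 0 for all j, and let q > 0 satisfy Φ(q) = (1 + (1/2)^(1/p))/2, where Φ is the standard normal CDF. Let a, b, x : Fin p → ℝ with a j < x j < b j for all j, and suppose σ j * q < min (x j - a j) (b j - x j) for every j. Then the product over j of the Gaussian probabilities (gaussianReal (x j) ((σ j)^2)) (Ioo (a j) (b j)) is strictly greater than 1/2. -/
open MeasureTheory ProbabilityTheory Set ENNReal

private lemma gauss_symm (q : ℝ) :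
    (gaussianReal 0 1) (Iio (-q)) = (gaussianReal 0 1) (Ioi q) := by
  have hmap : (gaussianReal 0 1).map (fun z : ℝ => (-1) * z) = gaussianReal 0 1 := by
    rw [gaussianReal_map_const_mul]
    norm_num
  calc (gaussianReal 0 1) (Iio (-q))
      = ((gaussianReal 0 1).map (fun z : ℝ => (-1) * z)) (Iio (-q)) := by rw [hmap]
    _ = (gaussianReal 0 1) ((fun z : ℝ => (-1) * z) ⁻¹' (Iio (-q))) := by
        rw [Measure.map_apply (measurable_const_mul _) measurableSet_Iio]
    _ = (gaussianReal 0 1) (Ioi q) := by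
        congr 1
        ext z
        simp only [mem_preimage, mem_Iio, mem_Ioi]
        constructor <;> intro h <;> linarith

private lemma gauss_Ico (q r : ℝ) (hq : 0 < q) (hr0 : 0 ≤ r) (hr1 : r ≤ 1)
    (hΦ : (gaussianReal 0 1) (Iio q) = ENNReal.ofReal ((1 + r) / 2)) :
    (gaussianReal 0 1) (Ico (-q) q) = ENNReal.ofReal r := by
  set γ := gaussianReal 0 1 with hγ
  have hsing : γ {q} = 0 :=
    gaussianReal_absolutelyContinuous 0 one_ne_zero (measure_singleton q)
  have hsplit : γ (Iio q) + γ (Ici q) = 1 := by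
    rw [← measure_union (by simp [Set.disjoint_left]) measurableSet_Ici,
      Iio_union_Ici, measure_univ]
  have hIci : γ (Ici q) = γ (Ioi q) := by
    have hIciEq : Ici q = {q} ∪ Ioi q := by
      ext z
      simp only [mem_Ici, mem_union, mem_singleton_iff, mem_Ioi]
      constructor
      · intro h
        exact h.eq_or_lt.imp Eq.symm id
      · rintro (rfl | h)
        · exact le_refl _
        · exact h.le
    rw [hIciEq, measure_union (by simp [Set.disjoint_left]) measurableSet_Ioi, hsing, zero_add]
  have hIoi : γ (Ioi q) = ENNReal.ofReal ((1 - r) / 2) := by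
    have h1 : γ (Ioi q) = 1 - ENNReal.ofReal ((1 + r) / 2) := by
      rw [← hIci]
      refine ENNReal.eq_sub_of_add_eq ENNReal.ofReal_ne_top ?_
      rw [add_comm, ← hΦ]
      exact hsplit
    rw [h1, ← ENNReal.ofReal_one, ← ENNReal.ofReal_sub _ (by linarith)]
    congr 1
    ring
  have hIio : γ (Iio (-q)) = ENNReal.ofReal ((1 - r) / 2) := by
    rw [gauss_symm, ← hγ, hIoi]
  have hunion : Iio (-q) ∪ Ico (-q) q = Iio q := by
    ext z
    simp only [mem_union, mem_Iio, mem_Ico]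
    constructor
    · rintro (h | ⟨h1, h2⟩)
      · linarith
      · exact h2
    · intro h
      rcases lt_or_ge z (-q) with h' | h'
      · exact Or.inl h'
      · exact Or.inr ⟨h', h⟩
  have hdisj : Disjoint (Iio (-q)) (Ico (-q) q) := by
    simp only [Set.disjoint_left, mem_Iio, mem_Ico, not_and, not_lt]
    exact fun z h1 h2 => absurd h2 (not_le.mpr h1)
  have hadd : γ (Iio (-q)) + γ (Ico (-q) q) = γ (Iio q) := by
    rw [← measure_union hdisj measurableSet_Ico, hunion]
  rw [hIio, hΦ] at hadd
  have h3 : γ (Ico (-q) q)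
      = ENNReal.ofReal ((1 + r) / 2) - ENNReal.ofReal ((1 - r) / 2) :=
    ENNReal.eq_sub_of_add_eq ENNReal.ofReal_ne_top (by rw [add_comm]; exact hadd)
  rw [h3, ← ENNReal.ofReal_sub _ (by linarith)]
  congr 1
  ring

private lemma gauss_Ioo_gt (q r : ℝ) (hq : 0 < q) (hr0 : 0 ≤ r) (hr1 : r ≤ 1)
    (hΦ : (gaussianReal 0 1) (Iio q) = ENNReal.ofReal ((1 + r) / 2))
    (u v : ℝ) (hu : u < -q) (hv : q < v) :
    ENNReal.ofReal r < (gaussianReal 0 1) (Ioo u v) := by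
  set γ := gaussianReal 0 1 with hγ
  have hpos : γ (Ioo u (-q)) ≠ 0 := by
    intro h0
    have := gaussianReal_absolutelyContinuous' 0 one_ne_zero h0
    rw [Real.volume_Ioo] at this
    simp only [ENNReal.ofReal_eq_zero] at this
    linarith
  have hsub : Ioo u (-q) ∪ Ico (-q) q ⊆ Ioo u v := by
    rintro z (⟨h1, h2⟩ | ⟨h1, h2⟩) <;> exact ⟨by linarith, by linarith⟩
  have hdisj : Disjoint (Ioo u (-q)) (Ico (-q) q) := by
    simp only [Set.disjoint_left, mem_Ioo, mem_Ico, not_and, not_lt]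
    exact fun z hz h3 => absurd h3 (not_le.mpr hz.2)
  calc ENNReal.ofReal r < ENNReal.ofReal r + γ (Ioo u (-q)) :=
        ENNReal.lt_add_right (by simp) hpos
    _ = γ (Ioo u (-q)) + γ (Ico (-q) q) := by
        rw [gauss_Ico q r hq hr0 hr1 hΦ, add_comm]
    _ = γ (Ioo u (-q) ∪ Ico (-q) q) := by
        rw [measure_union hdisj measurableSet_Ico]
    _ ≤ γ (Ioo u v) := measure_mono hsub

private lemma gauss_transfer (m s : ℝ) (hs : 0 < s) (a b : ℝ) :
    (gaussianReal m ((s^2).toNNReal)) (Ioo a b)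
      = (gaussianReal 0 1) (Ioo ((a - m) / s) ((b - m) / s)) := by
  have hvar : (NNReal.mk (s^2) (sq_nonneg s)) * 1 = (s^2).toNNReal := by
    rw [mul_one]
    refine NNReal.coe_injective ?_
    simp [Real.coe_toNNReal _ (sq_nonneg s)]
  have h1 : (gaussianReal 0 1).map (fun z : ℝ => s * z) = gaussianReal 0 ((s^2).toNNReal) := by
    rw [gaussianReal_map_const_mul, mul_zero, hvar]
  have h2 : (gaussianReal 0 1).map (fun z : ℝ => s * z + m)
      = gaussianReal m ((s^2).toNNReal) := by
    have hcomp : (fun z : ℝ => s * z + m) = (fun z : ℝ => z + m) ∘ (fun z : ℝ => s * z) := rfl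
    rw [hcomp, ← Measure.map_map (measurable_add_const m) (measurable_const_mul s), h1,
      gaussianReal_map_add_const, zero_add]
  rw [← h2, Measure.map_apply ((measurable_const_mul s).add_const m) measurableSet_Ioo]
  congr 1
  ext z
  simp only [mem_preimage, mem_Ioo]
  rw [div_lt_iff₀ hs, lt_div_iff₀ hs]
  constructor <;> rintro ⟨h1', h2'⟩ <;> constructor <;> nlinarith

/-- Multidimensional leaf-membership bound: if `x` lies in the interior of the
hyper-rectangle `∏ j, [a j, b j]` and each `σ j * q` is smaller than the distance from
`x j` to both endpoints, where `q` is the `(1 + 0.5^(1/p))/2` quantile of the standard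
Gaussian, then the product of the per-coordinate Gaussian probabilities of the open
intervals exceeds `1/2`. -/
theorem stmt0 (p : ℕ) (hp : 1 ≤ p) (σ : Fin p → ℝ) (hσ : ∀ j, 0 < σ j)
    (q : ℝ) (hq : 0 < q)
    (hΦ : (gaussianReal 0 1) (Iio q)
        = ENNReal.ofReal ((1 + ((1:ℝ)/2) ^ ((1:ℝ)/p)) / 2))
    (a b x : Fin p → ℝ) (hax : ∀ j, a j < x j) (hxb : ∀ j, x j < b j)
    (hσq : ∀ j, σ j * q < min (x j - a j) (b j - x j)) :
    (1:ℝ≥0∞)/2 < ∏ j, (gaussianReal (x j) (((σ j)^2).toNNReal)) (Ioo (a j) (b j)) := by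
  have hp0 : (p:ℝ) ≠ 0 := Nat.cast_ne_zero.mpr (by omega)
  set r : ℝ := ((1:ℝ)/2) ^ ((1:ℝ)/p) with hr
  have hr0 : 0 < r := Real.rpow_pos_of_pos (by norm_num) _
  have hr1 : r ≤ 1 := Real.rpow_le_one (by norm_num) (by norm_num) (by positivity)
  have key : ∀ j, ENNReal.ofReal r
      < (gaussianReal (x j) (((σ j)^2).toNNReal)) (Ioo (a j) (b j)) := by
    intro j
    rw [gauss_transfer (x j) (σ j) (hσ j)]
    have h1 := (hσq j).trans_le (min_le_left _ _)
    have h2 := (hσq j).trans_le (min_le_right _ _)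
    refine gauss_Ioo_gt q r hq hr0.le hr1 hΦ _ _ ?_ ?_
    · rw [div_lt_iff₀ (hσ j)]
      nlinarith [hσ j]
    · rw [lt_div_iff₀ (hσ j)]
      nlinarith [hσ j]
  have hne : ∀ j, (gaussianReal (x j) (((σ j)^2).toNNReal)) (Ioo (a j) (b j)) ≠ ∞ :=
    fun j => measure_ne_top _ _
  haveI : Nonempty (Fin p) := ⟨⟨0, by omega⟩⟩
  have keyR : ∀ j, r < ((gaussianReal (x j) (((σ j)^2).toNNReal)) (Ioo (a j) (b j))).toReal :=
    fun j => (ENNReal.ofReal_lt_iff_lt_toReal hr0.le (hne j)).mp (key j)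
  have hprodR : (1:ℝ)/2
      < ∏ j, ((gaussianReal (x j) (((σ j)^2).toNNReal)) (Ioo (a j) (b j))).toReal := by
    have hlt : ∏ _j : Fin p, r
        < ∏ j, ((gaussianReal (x j) (((σ j)^2).toNNReal)) (Ioo (a j) (b j))).toReal :=
      Finset.prod_lt_prod_of_nonempty (fun j _ => hr0) (fun j _ => keyR j)
        Finset.univ_nonempty
    have hrp : ∏ _j : Fin p, r = (1:ℝ)/2 := by
      rw [Finset.prod_const, Finset.card_univ, Fintype.card_fin, hr,
        ← Real.rpow_natCast (((1:ℝ)/2) ^ ((1:ℝ)/p)) p,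
        ← Real.rpow_mul (by norm_num : (0:ℝ) ≤ 1/2)]
      rw [one_div (p:ℝ), inv_mul_cancel₀ hp0, Real.rpow_one]
    linarith [hrp ▸ hlt]
  have hprodne : (∏ j, (gaussianReal (x j) (((σ j)^2).toNNReal)) (Ioo (a j) (b j))) ≠ ∞ :=
    (ENNReal.prod_lt_top (fun j _ => (hne j).lt_top)).ne
  have h12 : (1:ℝ≥0∞)/2 = ENNReal.ofReal ((1:ℝ)/2) := by
    rw [ENNReal.ofReal_div_of_pos (by norm_num)]
    norm_num
  rw [h12, ENNReal.ofReal_lt_iff_lt_toReal (by norm_num) hprodne, ENNReal.toReal_prod]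
  exact hprodR
end

section
/- Let n, K ≥ 1 and let P be an n × K real matrix with nonnegative entries whose rows each sum to 1. Suppose that for every column k there exists a row i with P i k > 1/2. Then the K × K matrix Pᵀ * P is invertible. -/
open Matrix

/-- If `P` is a nonnegative row-stochastic matrix and each column has some row entry
exceeding `1/2`, then the Gram matrix `Pᵀ * P` is invertible. -/
theorem stmt6 (n K : ℕ) (hn : 1 ≤ n) (hK : 1 ≤ K)
    (P : Matrix (Fin n) (Fin K) ℝ)
    (hnonneg : ∀ i k, 0 ≤ P i k)
    (hrow : ∀ i, ∑ k, P i k = 1)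
    (hcol : ∀ k, ∃ i, (1:ℝ)/2 < P i k) :
    IsUnit (Pᵀ * P) := by
  rw [Matrix.isUnit_iff_isUnit_det, isUnit_iff_ne_zero]
  intro hdet
  obtain ⟨v, hv, hmul⟩ := (Matrix.exists_mulVec_eq_zero_iff).mpr hdet
  have hPv : P *ᵥ v = 0 := by
    have h0 : (P *ᵥ v) ⬝ᵥ (P *ᵥ v) = 0 := by
      have h := congrArg (fun w => v ⬝ᵥ w) hmul
      simpa [← Matrix.mulVec_mulVec, Matrix.dotProduct_mulVec,
        Matrix.vecMul_transpose] using h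
    exact dotProduct_self_eq_zero.mp h0
  -- pick k0 maximizing |v k|
  obtain ⟨k0, -, hk0⟩ := Finset.exists_max_image Finset.univ (fun k => |v k|)
    ⟨⟨0, hK⟩, Finset.mem_univ _⟩
  have hvk0 : 0 < |v k0| := by
    obtain ⟨j, hj⟩ := Function.ne_iff.mp hv
    exact lt_of_lt_of_le (abs_pos.mpr hj) (hk0 j (Finset.mem_univ _))
  obtain ⟨i, hi⟩ := hcol k0
  have hrowi : ∑ j, P i j * v j = 0 := congrFun hPv i
  have hsplit : P i k0 * v k0 = -∑ j ∈ Finset.univ.erase k0, P i j * v j := by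
    have h := Finset.sum_erase_add Finset.univ (fun j => P i j * v j) (Finset.mem_univ k0)
    linarith [h, hrowi]
  have hbound : P i k0 * |v k0| ≤ (1 - P i k0) * |v k0| := by
    have h1 : |P i k0 * v k0| ≤ ∑ j ∈ Finset.univ.erase k0, |P i j * v j| := by
      rw [hsplit, abs_neg]
      exact Finset.abs_sum_le_sum_abs _ _
    have h2 : ∑ j ∈ Finset.univ.erase k0, |P i j * v j|
        ≤ ∑ j ∈ Finset.univ.erase k0, P i j * |v k0| := by
      refine Finset.sum_le_sum fun j _ => ?_
      rw [abs_mul, abs_of_nonneg (hnonneg i j)]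
      exact mul_le_mul_of_nonneg_left (hk0 j (Finset.mem_univ _)) (hnonneg i j)
    have h3 : ∑ j ∈ Finset.univ.erase k0, P i j * |v k0| = (1 - P i k0) * |v k0| := by
      rw [← Finset.sum_mul]
      have := Finset.sum_erase_add Finset.univ (fun j => P i j) (Finset.mem_univ k0)
      rw [hrow i] at this
      have : ∑ j ∈ Finset.univ.erase k0, P i j = 1 - P i k0 := by linarith
      rw [this]
    have h4 : |P i k0 * v k0| = P i k0 * |v k0| := by
      rw [abs_mul, abs_of_nonneg (hnonneg i k0)]
    linarith
  nlinarith
end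

section
/- Let n, K, p ≥ 1. Let x : Fin n → Fin p → ℝ be n observations, σ : Fin p → ℝ with σ j > 0, and let q > 0 satisfy Φ(q) = (1 + (1/2)^(1/p))/2 where Φ is the standard normal CDF. Let a, b : Fin K → Fin p → ℝ define K hyper-rectangular regions, and define the n × K matrix P by P i k = ∏_{j} (gaussianReal (x i j) ((σ j)^2)) (Ioo (a k j) (b k j)). Assume (i) for every i, ∑_{k} P i k = 1, and (ii) for every region k there exists an observation i with a k j < x i j < b k j and σ j * q < min (x i j - a k j) (b k j - x i j) for all j. Then the K × K matrix Pᵀ * P is invertible. -/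
open MeasureTheory ProbabilityTheory Set Matrix
open scoped NNReal ENNReal

lemma gauss_eq_map' (m s : ℝ) :
    gaussianReal m ((s^2).toNNReal) = (gaussianReal 0 1).map (fun z => s * z + m) := by
  have h1 : (gaussianReal 0 1).map (fun z => s * z) = gaussianReal 0 (NNReal.mk (s^2) (sq_nonneg s) * 1) := by
    simpa using gaussianReal_map_const_mul (μ := 0) (v := 1) s
  have h2 : (fun z => s * z + m) = (· + m) ∘ (fun z => s * z) := rfl
  rw [h2, ← Measure.map_map (by fun_prop) (by fun_prop), h1, gaussianReal_map_add_const]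
  congr 1
  · simp
  · ext
    simp [Real.coe_toNNReal _ (sq_nonneg s)]

lemma gauss_Icc_toReal' (q : ℝ) (hq : 0 < q) :
    ((gaussianReal 0 1) (Icc (-q) q)).toReal
      = 2 * ((gaussianReal 0 1) (Iio q)).toReal - 1 := by
  set μ := gaussianReal 0 1 with hμ
  have hac : μ ≪ (volume : Measure ℝ) := gaussianReal_absolutelyContinuous 0 one_ne_zero
  have hsing : ∀ t : ℝ, μ {t} = 0 := fun t => hac (Real.volume_singleton)
  have hneg : μ (Iio (-q)) = μ (Ioi q) := by
    have hmap : μ.map (fun z => (-1) * z) = μ := by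
      simpa using gaussianReal_map_const_mul (μ := 0) (v := 1) (-1)
    calc μ (Iio (-q)) = (μ.map (fun z => (-1) * z)) (Iio (-q)) := by rw [hmap]
      _ = μ ((fun z => (-1) * z) ⁻¹' (Iio (-q))) := by
          rw [Measure.map_apply (by fun_prop) measurableSet_Iio]
      _ = μ (Ioi q) := by
          congr 1; ext z
          simp only [mem_preimage, mem_Iio, mem_Ioi]
          constructor <;> intro h <;> linarith
  have hIic : μ (Iic q) = μ (Iio q) := by
    have : Iic q = Iio q ∪ {q} := by
      ext z; simp [le_iff_lt_or_eq]
    rw [this]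
    refine le_antisymm ((measure_union_le _ _).trans ?_) (measure_mono subset_union_left)
    rw [hsing q, add_zero]
  have hIoi : μ (Ioi q) = 1 - μ (Iio q) := by
    rw [← hIic, ← compl_Iic, measure_compl measurableSet_Iic (measure_ne_top _ _), measure_univ]
  have hsplit : μ (Iio (-q)) + μ (Icc (-q) q) = μ (Iic q) := by
    rw [← measure_union (by
      rw [Set.disjoint_left]; intro z hz hz2
      exact absurd hz2.1 (not_le.mpr hz)) measurableSet_Icc]
    congr 1
    rw [Iio_union_Icc_eq_Iic (by linarith)]
  have h1 : μ (Iio q) ≤ 1 := prob_le_one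
  rw [hneg, hIoi, hIic] at hsplit
  have := congrArg ENNReal.toReal hsplit
  rw [ENNReal.toReal_add (by rw [← hIoi, ← hneg]; exact measure_ne_top _ _) (measure_ne_top _ _),
    ENNReal.toReal_sub_of_le h1 (by simp)] at this
  simp only [ENNReal.toReal_one] at this
  linarith

lemma factor_gt' (q m s aa bb : ℝ) (hq : 0 < q) (hs : 0 < s)
    (ha : aa < m - s*q) (hb : m + s*q < bb) :
    ((gaussianReal 0 1) (Icc (-q) q)).toReal
      < ((gaussianReal m ((s^2).toNNReal)) (Ioo aa bb)).toReal := by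
  set ν := gaussianReal m ((s^2).toNNReal) with hν
  have hv : ((s^2).toNNReal : ℝ≥0) ≠ 0 := by
    simp only [ne_eq, Real.toNNReal_eq_zero, not_le]
    positivity
  have hmid : ν (Icc (m - s*q) (m + s*q)) = (gaussianReal 0 1) (Icc (-q) q) := by
    rw [hν, gauss_eq_map', Measure.map_apply (by fun_prop) measurableSet_Icc]
    congr 1
    ext z
    simp only [mem_preimage, mem_Icc]
    constructor <;> intro h <;> constructor <;> nlinarith [h.1, h.2]
  have hextra : ν (Ioo aa (m - s*q)) ≠ 0 := by
    intro h0
    have := gaussianReal_absolutelyContinuous' m hv h0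
    rw [Real.volume_Ioo] at this
    exact absurd this (by simp; linarith)
  have hdisj : Disjoint (Ioo aa (m - s*q)) (Icc (m - s*q) (m + s*q)) := by
    rw [Set.disjoint_left]
    intro z hz hz2
    exact absurd hz2.1 (not_le.mpr hz.2)
  have hsub : ν (Ioo aa (m - s*q)) + ν (Icc (m - s*q) (m + s*q)) ≤ ν (Ioo aa bb) := by
    rw [← measure_union hdisj measurableSet_Icc]
    apply measure_mono
    intro z hz
    rcases hz with ⟨h1, h2⟩ | ⟨h1, h2⟩
    · exact ⟨h1, by nlinarith⟩
    · exact ⟨by linarith, by linarith⟩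
  have hlt : ν (Icc (m - s*q) (m + s*q)) < ν (Ioo aa bb) := by
    refine lt_of_lt_of_le ?_ hsub
    exact lt_of_lt_of_eq (ENNReal.lt_add_right (measure_ne_top _ _) hextra) (add_comm _ _)
  rw [← hmid]
  exact ENNReal.toReal_strict_mono (measure_ne_top _ _) hlt

/-- Theorem 1 of the paper: with `P i k` the probability that the Gaussian-perturbed
latent point `U_i ~ ⊗_j N(x i j, (σ j)²)` lies in the region `∏_j (a k j, b k j)`,
if the rows of `P` sum to 1 and every region contains an observation whose distance to
all faces exceeds `σ j * q` (with `q` the `(1 + 0.5^(1/p))/2` standard normal quantile),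
then `Pᵀ * P` is invertible. -/
theorem stmt7 (n K p : ℕ) (hn : 1 ≤ n) (hK : 1 ≤ K) (hp : 1 ≤ p)
    (x : Fin n → Fin p → ℝ) (σ : Fin p → ℝ) (hσ : ∀ j, 0 < σ j)
    (q : ℝ) (hq : 0 < q)
    (hΦ : (gaussianReal 0 1) (Iio q)
        = ENNReal.ofReal ((1 + ((1:ℝ)/2) ^ ((1:ℝ)/p)) / 2))
    (a b : Fin K → Fin p → ℝ)
    (P : Matrix (Fin n) (Fin K) ℝ)
    (hP : ∀ i k, P i k
        = ∏ j, ((gaussianReal (x i j) (((σ j)^2).toNNReal))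
            (Ioo (a k j) (b k j))).toReal)
    (hrow : ∀ i, ∑ k, P i k = 1)
    (hrep : ∀ k, ∃ i, ∀ j, a k j < x i j ∧ x i j < b k j ∧
        σ j * q < min (x i j - a k j) (b k j - x i j)) :
    IsUnit (Pᵀ * P) := by
  haveI : Nonempty (Fin p) := ⟨⟨0, hp⟩⟩
  set c : ℝ := ((1:ℝ)/2) ^ ((1:ℝ)/p) with hc_def
  have hc_pos : 0 < c := Real.rpow_pos_of_pos (by norm_num) _
  have hΦr : ((gaussianReal 0 1) (Iio q)).toReal = (1 + c) / 2 := by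
    rw [hΦ, ENNReal.toReal_ofReal (by positivity)]
  have hIcc : ((gaussianReal 0 1) (Icc (-q) q)).toReal = c := by
    rw [gauss_Icc_toReal' q hq, hΦr]; ring
  have hcp : c ^ p = 1 / 2 := by
    rw [hc_def, ← Real.rpow_natCast (((1:ℝ)/2) ^ ((1:ℝ)/p)) p, ← Real.rpow_mul (by norm_num)]
    rw [one_div_mul_cancel (Nat.cast_ne_zero.mpr (by omega))]
    simp
  -- entries of P are nonneg
  have hPnn : ∀ i k, 0 ≤ P i k := by
    intro i k
    rw [hP]
    exact Finset.prod_nonneg fun j _ => ENNReal.toReal_nonneg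
  -- dominance: each column has a row with entry > 1/2
  have hdom : ∀ k, ∃ i, 1 / 2 < P i k := by
    intro k
    obtain ⟨i, hi⟩ := hrep k
    refine ⟨i, ?_⟩
    rw [← hcp, hP]
    have : (c : ℝ) ^ p = ∏ _j : Fin p, c := by simp
    rw [this]
    refine Finset.prod_lt_prod_of_nonempty (fun j _ => hc_pos) (fun j _ => ?_)
      Finset.univ_nonempty
    rw [← hIcc]
    have h3 := (hi j).2.2
    have hmin1 := lt_of_lt_of_le h3 (min_le_left _ _)
    have hmin2 := lt_of_lt_of_le h3 (min_le_right _ _)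
    exact factor_gt' q (x i j) (σ j) (a k j) (b k j) hq (hσ j)
      (by linarith) (by linarith)
  -- P has trivial kernel
  have hker : ∀ v : Fin K → ℝ, P *ᵥ v = 0 → v = 0 := by
    intro v hv
    by_contra hvne
    haveI : Nonempty (Fin K) := ⟨⟨0, hK⟩⟩
    obtain ⟨k0, -, hk0⟩ := Finset.exists_max_image Finset.univ (fun k => |v k|)
      Finset.univ_nonempty
    have hvk0 : 0 < |v k0| := by
      obtain ⟨k, hk⟩ := Function.ne_iff.mp hvne
      exact lt_of_lt_of_le (abs_pos.mpr hk) (hk0 k (Finset.mem_univ k))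
    obtain ⟨i, hi⟩ := hdom k0
    have hrowi : ∑ k, P i k * v k = 0 := by
      have := congrFun hv i
      simpa [Matrix.mulVec, dotProduct] using this
    have hsum_erase : ∑ k ∈ Finset.univ.erase k0, P i k = 1 - P i k0 := by
      have h := Finset.add_sum_erase Finset.univ (fun k => P i k) (Finset.mem_univ k0)
      beta_reduce at h
      rw [hrow i] at h
      linarith
    have hmain : P i k0 * |v k0| ≤ (1 - P i k0) * |v k0| := by
      have h1 : P i k0 * v k0 = - ∑ k ∈ Finset.univ.erase k0, P i k * v k := by
        have h := Finset.add_sum_erase Finset.univ (fun k => P i k * v k) (Finset.mem_univ k0)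
        beta_reduce at h
        rw [hrowi] at h
        linarith
      calc P i k0 * |v k0| = |P i k0 * v k0| := by
            rw [abs_mul, abs_of_nonneg (hPnn i k0)]
        _ = |∑ k ∈ Finset.univ.erase k0, P i k * v k| := by rw [h1, abs_neg]
        _ ≤ ∑ k ∈ Finset.univ.erase k0, |P i k * v k| := Finset.abs_sum_le_sum_abs _ _
        _ ≤ ∑ k ∈ Finset.univ.erase k0, P i k * |v k0| := by
            refine Finset.sum_le_sum fun k _ => ?_
            rw [abs_mul, abs_of_nonneg (hPnn i k)]
            exact mul_le_mul_of_nonneg_left (hk0 k (Finset.mem_univ k)) (hPnn i k)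
        _ = (1 - P i k0) * |v k0| := by rw [← Finset.sum_mul, hsum_erase]
    nlinarith
  -- PᵀP has trivial kernel hence is injective hence a unit
  rw [← Matrix.mulVec_injective_iff_isUnit]
  intro w1 w2 hw
  have hsub : (Pᵀ * P) *ᵥ (w1 - w2) = 0 := by
    rw [Matrix.mulVec_sub, hw, sub_self]
  have hPw : P *ᵥ (w1 - w2) = 0 := by
    have hdp : (P *ᵥ (w1 - w2)) ⬝ᵥ (P *ᵥ (w1 - w2)) = 0 := by
      calc (P *ᵥ (w1 - w2)) ⬝ᵥ (P *ᵥ (w1 - w2))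
          = ((w1 - w2) ᵥ* Pᵀ) ⬝ᵥ (P *ᵥ (w1 - w2)) := by rw [Matrix.vecMul_transpose]
        _ = (w1 - w2) ⬝ᵥ (Pᵀ *ᵥ (P *ᵥ (w1 - w2))) := by rw [← Matrix.dotProduct_mulVec]
        _ = (w1 - w2) ⬝ᵥ ((Pᵀ * P) *ᵥ (w1 - w2)) := by rw [Matrix.mulVec_mulVec]
        _ = 0 := by rw [hsub, dotProduct_zero]
    exact dotProduct_self_eq_zero.mp hdp
  have := hker _ hPw
  exact sub_eq_zero.mp this
end
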